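/- Let p : ℝ → ℝ be a continuously differentiable, strictly positive probability density with score s = p'/p, and let Σ : ℝ → ℝ be continuously differentiable, with x ↦ p(x)Σ'(x), p(x)Σ(x)², p(x)Σ(x)s(x), p(x)s(x)² Lebesgue integrable on ℝ and p(x)Σ(x) → 0 as x → ±∞. Then ∫_ℝ p(x)[Σ'(x) + (1/2)Σ(x)²] dx ≥ −(1/2)∫_ℝ p(x)s(x)² dx, with equality if and only if Σ(x) = s(x) for every x ∈ ℝ. -/

import Mathlib

open MeasureTheory Filter

/-- Score-matching lower bound (Hyvärinen, 1-dimensional): under the same hypotheses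
as the score-matching identity, `∫ p(Sig' + ½Sig²) ≥ −½∫ p s²`, with equality iff
`Sig` equals the score `s` everywhere. -/
theorem score_matching_minimizer (p Sig : ℝ → ℝ)
    (hp : ContDiff ℝ 1 p) (hppos : ∀ x, 0 < p x)
    (hpdens : ∫ x : ℝ, p x = 1)
    (hSig : ContDiff ℝ 1 Sig)
    (s : ℝ → ℝ) (hs : s = fun x => deriv p x / p x)
    (hint1 : Integrable (fun x => p x * deriv Sig x))
    (hint2 : Integrable (fun x => p x * (Sig x) ^ 2))
    (hint3 : Integrable (fun x => p x * (Sig x * s x)))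
    (hint4 : Integrable (fun x => p x * (s x) ^ 2))
    (hdecayTop : Tendsto (fun x => p x * Sig x) atTop (nhds 0))
    (hdecayBot : Tendsto (fun x => p x * Sig x) atBot (nhds 0)) :
    (∫ x : ℝ, p x * (deriv Sig x + (1 / 2) * (Sig x) ^ 2))
      ≥ -(1 / 2) * (∫ x : ℝ, p x * (s x) ^ 2) ∧
    ((∫ x : ℝ, p x * (deriv Sig x + (1 / 2) * (Sig x) ^ 2))
      = -(1 / 2) * (∫ x : ℝ, p x * (s x) ^ 2) ↔ ∀ x, Sig x = s x) := by
  have hpne : ∀ x, p x ≠ 0 := fun x => (hppos x).ne'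
  have hps : ∀ x, deriv p x = p x * s x := by
    intro x; rw [hs]
    rw [mul_comm, div_mul_cancel₀ _ (hpne x)]
  have hcp : Continuous p := hp.continuous
  have hcp' : Continuous (deriv p) := hp.continuous_deriv le_rfl
  have hcs : Continuous s := by rw [hs]; exact hcp'.div hcp hpne
  have hcS : Continuous Sig := hSig.continuous
  have hderiv : ∀ x, HasDerivAt (fun x => p x * Sig x)
      (deriv p x * Sig x + p x * deriv Sig x) x := fun x =>
    ((hp.differentiable one_ne_zero x).hasDerivAt).mul ((hSig.differentiable one_ne_zero x).hasDerivAt)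
  have heq : (fun x => deriv p x * Sig x + p x * deriv Sig x)
      = fun x => p x * (Sig x * s x) + p x * deriv Sig x := by
    funext x; rw [hps]; ring
  have hint3' : Integrable (fun x => deriv p x * Sig x + p x * deriv Sig x) := by
    rw [heq]; exact hint3.add hint1
  have hFTC : ∫ x : ℝ, (deriv p x * Sig x + p x * deriv Sig x) = 0 - 0 :=
    integral_of_hasDerivAt_of_tendsto hderiv hint3' hdecayBot hdecayTop
  rw [heq, integral_add hint3 hint1, sub_zero] at hFTC
  have hparts : ∫ x : ℝ, p x * deriv Sig x = - ∫ x : ℝ, p x * (Sig x * s x) := by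
    linarith
  -- integrability of p (Sig - s)^2
  have hintE : Integrable (fun x => p x * (Sig x - s x) ^ 2) := by
    have : (fun x => p x * (Sig x - s x) ^ 2)
        = fun x => p x * (Sig x) ^ 2 - 2 * (p x * (Sig x * s x)) + p x * (s x) ^ 2 := by
      funext x; ring
    rw [this]; exact (hint2.sub (hint3.const_mul 2)).add hint4
  have hint32 : Integrable (fun x => 2 * (p x * (Sig x * s x))) := hint3.const_mul 2
  have hint23 : Integrable (fun x => p x * (Sig x) ^ 2 - 2 * (p x * (Sig x * s x))) :=
    hint2.sub hint32
  have hE : ∫ x : ℝ, p x * (Sig x - s x) ^ 2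
      = (∫ x : ℝ, p x * (Sig x) ^ 2) - 2 * (∫ x : ℝ, p x * (Sig x * s x))
        + (∫ x : ℝ, p x * (s x) ^ 2) := by
    have : (fun x => p x * (Sig x - s x) ^ 2)
        = fun x => p x * (Sig x) ^ 2 - 2 * (p x * (Sig x * s x)) + p x * (s x) ^ 2 := by
      funext x; ring
    rw [this, integral_add hint23 hint4,
      integral_sub hint2 hint32, integral_const_mul]
  have hLHS : ∫ x : ℝ, p x * (deriv Sig x + (1 / 2) * (Sig x) ^ 2)
      = (∫ x : ℝ, p x * deriv Sig x) + (1 / 2) * ∫ x : ℝ, p x * (Sig x) ^ 2 := by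
    have : (fun x => p x * (deriv Sig x + (1 / 2) * (Sig x) ^ 2))
        = fun x => p x * deriv Sig x + (1 / 2) * (p x * (Sig x) ^ 2) := by
      funext x; ring
    have h2 : Integrable (fun x => (1 / 2 : ℝ) * (p x * (Sig x) ^ 2)) := hint2.const_mul _
    rw [this, integral_add hint1 h2, integral_const_mul]
  have hkey : ∫ x : ℝ, p x * (deriv Sig x + (1 / 2) * (Sig x) ^ 2)
      = -(1 / 2) * (∫ x : ℝ, p x * (s x) ^ 2)
        + (1 / 2) * ∫ x : ℝ, p x * (Sig x - s x) ^ 2 := by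
    rw [hLHS, hparts, hE]; ring
  have hEnonneg : 0 ≤ ∫ x : ℝ, p x * (Sig x - s x) ^ 2 :=
    integral_nonneg fun x => mul_nonneg (hppos x).le (sq_nonneg _)
  constructor
  · rw [hkey]; nlinarith
  · rw [hkey]
    constructor
    · intro h
      have hE0 : ∫ x : ℝ, p x * (Sig x - s x) ^ 2 = 0 := by linarith
      have hnn : 0 ≤ (fun x => p x * (Sig x - s x) ^ 2) := by
        intro x; exact mul_nonneg (hppos x).le (sq_nonneg _)
      have hc : Continuous (fun x => p x * (Sig x - s x) ^ 2) :=
        hcp.mul ((hcS.sub hcs).pow 2)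
      have hae : (fun x => p x * (Sig x - s x) ^ 2) =ᵐ[volume] 0 :=
        (integral_eq_zero_iff_of_nonneg hnn hintE).mp hE0
      have hzero : (fun x => p x * (Sig x - s x) ^ 2) = 0 :=
        (Continuous.ae_eq_iff_eq volume hc continuous_const).mp hae
      intro x
      have hx : p x * (Sig x - s x) ^ 2 = 0 := congrFun hzero x
      have : (Sig x - s x) ^ 2 = 0 := by
        rcases mul_eq_zero.mp hx with h' | h'
        · exact absurd h' (hpne x)
        · exact h'
      have := pow_eq_zero_iff (n := 2) (by norm_num) |>.mp this
      linarith
    · intro h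
      have : (fun x => p x * (Sig x - s x) ^ 2) = fun _ => (0:ℝ) := by
        funext x; rw [h x]; ring
      rw [this, integral_zero]; ring
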